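/- Let T:V→𝔤 be a relative Rota-Baxter operator on a Lie-Yamaguti algebra (𝔤,[·,·],⟦·,·,·⟧) with respect to a representation (V;ρ,μ). For 𝔛 = a∧b ∈ ∧²𝔤, define δ(𝔛):V→𝔤 by δ(𝔛)v := T(D(a,b)v) − ⟦a,b,Tv⟧. Then δ₁ᵀ(δ(𝔛))(u,v) := ϱ(u)δ(𝔛)(v) − ϱ(v)δ(𝔛)(u) − δ(𝔛)([u,v]_T) = 0 for all u,v ∈ V, where ϱ(u)x := [Tu,x]+T(ρ(x)u) and [u,v]_T := ρ(Tu)v−ρ(Tv)u. -/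

import Mathlib

open scoped BigOperators

variable (K : Type*) [Field K]

section Defs
variable {g V : Type*} [AddCommGroup g] [Module K g] [AddCommGroup V] [Module K V]

/-- Bilinearity of a two-argument map. -/
def IsBilin (f : g → g → V) : Prop :=
  (∀ a b c, f (a + b) c = f a c + f b c) ∧
  (∀ (s : K) a c, f (s • a) c = s • f a c) ∧
  (∀ a b c, f a (b + c) = f a b + f a c) ∧
  (∀ (s : K) a b, f a (s • b) = s • f a b)

/-- Trilinearity of a three-argument map. -/
def IsTrilin (f : g → g → g → V) : Prop :=
  (∀ a b c d, f (a + b) c d = f a c d + f b c d) ∧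
  (∀ (s : K) a c d, f (s • a) c d = s • f a c d) ∧
  (∀ a b c d, f a (b + c) d = f a b d + f a c d) ∧
  (∀ (s : K) a b d, f a (s • b) d = s • f a b d) ∧
  (∀ a b c d, f a b (c + d) = f a b c + f a b d) ∧
  (∀ (s : K) a b c, f a b (s • c) = s • f a b c)

/-- Linearity of a map. -/
def IsLin (f : g → V) : Prop :=
  (∀ a b, f (a + b) = f a + f b) ∧ (∀ (s : K) a, f (s • a) = s • f a)

/-- `(g, br, tr)` is a Lie-Yamaguti algebra. -/
def IsLY (br : g → g → g) (tr : g → g → g → g) : Prop :=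
  IsBilin K br ∧ IsTrilin K tr ∧
  (∀ x y, br x y = - br y x) ∧
  (∀ x y z, tr x y z = - tr y x z) ∧
  (∀ x y z, br (br x y) z + br (br y z) x + br (br z x) y
      + tr x y z + tr y z x + tr z x y = 0) ∧
  (∀ x y z w, tr (br x y) z w + tr (br y z) x w + tr (br z x) y w = 0) ∧
  (∀ x y z w, tr x y (br z w) = br (tr x y z) w + br z (tr x y w)) ∧
  (∀ x y z w t, tr x y (tr z w t) =
      tr (tr x y z) w t + tr z (tr x y w) t + tr z w (tr x y t))

/-- The operator `D(x,y) = μ(y,x) − μ(x,y) + [ρ(x),ρ(y)] − ρ([x,y])`. -/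
def Dmap (br : g → g → g) (ρ : g → Module.End K V) (μ : g → g → Module.End K V)
    (x y : g) : Module.End K V :=
  μ y x - μ x y + (ρ x * ρ y - ρ y * ρ x) - ρ (br x y)

/-- `(V; ρ, μ)` is a representation of the Lie-Yamaguti algebra `(g, br, tr)`. -/
def IsRep (br : g → g → g) (tr : g → g → g → g)
    (ρ : g → Module.End K V) (μ : g → g → Module.End K V) : Prop :=
  IsLin K ρ ∧ IsBilin K μ ∧
  (∀ x y z, μ (br x y) z - μ x z * ρ y + μ y z * ρ x = 0) ∧
  (∀ x y z, μ x (br y z) - ρ y * μ x z + ρ z * μ x y = 0) ∧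
  (∀ x y z, ρ (tr x y z) = Dmap K br ρ μ x y * ρ z - ρ z * Dmap K br ρ μ x y) ∧
  (∀ x y z w, μ z w * μ x y - μ y w * μ x z - μ x (tr y z w)
      + Dmap K br ρ μ y z * μ x w = 0) ∧
  (∀ x y z w, μ (tr x y z) w + μ z (tr x y w) =
      Dmap K br ρ μ x y * μ z w - μ z w * Dmap K br ρ μ x y)

/-- `T : V → g` is a relative Rota-Baxter operator. -/
def IsRRB (br : g → g → g) (tr : g → g → g → g)
    (ρ : g → Module.End K V) (μ : g → g → Module.End K V) (T : V →ₗ[K] g) : Prop :=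
  (∀ u v, br (T u) (T v) = T (ρ (T u) v - ρ (T v) u)) ∧
  (∀ u v w, tr (T u) (T v) (T w) =
      T (Dmap K br ρ μ (T u) (T v) w + μ (T v) (T w) u - μ (T u) (T w) v))

end Defs

section Nij
variable {h : Type*} [AddCommGroup h]

/-- `N` is a Nijenhuis operator on the Lie-Yamaguti algebra `(h, br, tr)`. -/
def IsNijenhuis (br : h → h → h) (tr : h → h → h → h) (N : h → h) : Prop :=
  (∀ x y, br (N x) (N y) = N (br (N x) y + br x (N y) - N (br x y))) ∧
  (∀ x y z, tr (N x) (N y) (N z) =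
      N (tr (N x) (N y) z + tr (N x) y (N z) + tr x (N y) (N z)
        - N (tr (N x) y z) - N (tr x (N y) z) - N (tr x y (N z))
        + N (N (tr x y z))))

end Nij

theorem stmt10 {g V : Type*} [AddCommGroup g] [Module K g] [AddCommGroup V] [Module K V]
    (br : g → g → g) (tr : g → g → g → g)
    (ρ : g → Module.End K V) (μ : g → g → Module.End K V)
    (hLY : IsLY K br tr) (hrep : IsRep K br tr ρ μ)
    (T : V →ₗ[K] g) (hT : IsRRB K br tr ρ μ T)
    (a b : g)
    (δX : V → g) (hδ : ∀ v, δX v = T (Dmap K br ρ μ a b v) - tr a b (T v))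
    (ϱ : V → Module.End K g) (hϱ : ∀ u x, ϱ u x = br (T u) x + T (ρ x u)) :
    ∀ u v : V, ϱ u (δX v) - ϱ v (δX u) - δX (ρ (T u) v - ρ (T v) u) = 0 := by
  intro u v
  obtain ⟨hρlin, hμbil, _, _, hρtr, _, _⟩ := hrep
  obtain ⟨hTb, hTt⟩ := hT
  obtain ⟨hbrbil, htrtri, hskew, _, _, _, hFI, _⟩ := hLY
  set D := Dmap K br ρ μ a b with hDdef
  have hρsub : ∀ x y : g, ρ (x - y) = ρ x - ρ y := by
    intro x y
    rw [sub_eq_add_neg, ← neg_one_smul K y, hρlin.1, hρlin.2, neg_one_smul, ← sub_eq_add_neg]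
  have hbrsub : ∀ (x : g) (y z : g), br x (y - z) = br x y - br x z := by
    intro x y z
    rw [sub_eq_add_neg, ← neg_one_smul K z, hbrbil.2.2.1, hbrbil.2.2.2, neg_one_smul,
      ← sub_eq_add_neg]
  have h1 : ρ (tr a b (T v)) u = D (ρ (T v) u) - ρ (T v) (D u) := by
    rw [hρtr a b (T v)]; simp [LinearMap.sub_apply, Module.End.mul_apply, hDdef]
  have h2 : ρ (tr a b (T u)) v = D (ρ (T u) v) - ρ (T u) (D v) := by
    rw [hρtr a b (T u)]; simp [LinearMap.sub_apply, Module.End.mul_apply, hDdef]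
  have hskew1 : br (tr a b (T u)) (T v) = - br (T v) (tr a b (T u)) := hskew _ _
  simp only [hδ, hϱ]
  rw [hbrsub, hbrsub, ← hTb u v, hFI, hTb u (D v), hTb v (D u),
    hρsub, hρsub, hskew1]
  simp only [LinearMap.sub_apply, map_sub, h1, h2]
  abel
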